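/- The Poisson kernel of the unit strip 𝕊 = {z : 0 ≤ Re z ≤ 1}, given by P_b(x+iy, s) = sin(πx) / (2(cosh(π(y−s)) − cos(π(x−b)))) for b ∈ {0,1}, satisfies ∫_{-∞}^{∞} P_0(x+iy, s) ds = 1 − x and ∫_{-∞}^{∞} P_1(x+iy, s) ds = x, for 0 < x < 1 and y ∈ ℝ. -/

import Mathlib

open Real Filter MeasureTheory Topology

lemma strip_tanh_lim : Tendsto (fun t : ℝ => Real.sinh t / Real.cosh t) atTop (𝓝 1) := by
  have key : ∀ t : ℝ, Real.sinh t / Real.cosh t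
      = (1 - Real.exp (-(2*t))) / (1 + Real.exp (-(2*t))) := by
    intro t
    rw [Real.sinh_eq, Real.cosh_eq]
    have h1 : Real.exp t ≠ 0 := Real.exp_ne_zero t
    have h2 : (0:ℝ) < 1 + Real.exp (-(2*t)) := by positivity
    have e1 : Real.exp (-(2*t)) * Real.exp t = Real.exp (-t) := by
      rw [← Real.exp_add]; ring_nf
    have e1' : Real.exp (-(t*2)) * Real.exp t = Real.exp (-t) := by rw [mul_comm t 2]; exact e1
    field_simp
    nlinarith [e1, e1', Real.exp_pos t, Real.exp_pos (-t)]
  simp_rw [key]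
  have hexp : Tendsto (fun t : ℝ => Real.exp (-(2*t))) atTop (𝓝 0) := by
    apply Real.tendsto_exp_atBot.comp
    apply tendsto_neg_atBot_iff.mpr
    exact tendsto_id.const_mul_atTop two_pos
  have h := Filter.Tendsto.div
    ((tendsto_const_nhds (x := (1:ℝ)) (f := (atTop : Filter ℝ))).sub hexp)
    ((tendsto_const_nhds (x := (1:ℝ)) (f := (atTop : Filter ℝ))).add hexp)
    (by norm_num : (1:ℝ) + 0 ≠ 0)
  simpa [Pi.div_def] using h

lemma strip_kernel_deriv (a : ℝ) (ha0 : 0 < a) (ha1 : a < π) (t : ℝ) :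
    HasDerivAt (fun t : ℝ => (1/π) * Real.arctan
        (Real.sinh (π*t/2) / (Real.tan (a/2) * Real.cosh (π*t/2))))
      (Real.sin a / (2 * (Real.cosh (π * t) - Real.cos a))) t := by
  have hπ := Real.pi_pos
  set c := Real.tan (a/2) with hcdef
  have hs2 : 0 < Real.sin (a/2) := Real.sin_pos_of_pos_of_lt_pi (by linarith) (by linarith)
  have hc2 : 0 < Real.cos (a/2) := Real.cos_pos_of_mem_Ioo ⟨by linarith, by linarith⟩
  have hc : 0 < c := by rw [hcdef, Real.tan_eq_sin_div_cos]; positivity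
  have hg : HasDerivAt (fun t : ℝ => π * t / 2) (π/2) t := by
    simpa using ((hasDerivAt_id t).const_mul π).div_const 2
  have hsinh : HasDerivAt (fun t : ℝ => Real.sinh (π*t/2)) (Real.cosh (π*t/2) * (π/2)) t :=
    (Real.hasDerivAt_sinh _).comp t hg
  have hcosh : HasDerivAt (fun t : ℝ => c * Real.cosh (π*t/2)) (c * (Real.sinh (π*t/2) * (π/2))) t :=
    ((Real.hasDerivAt_cosh _).comp t hg).const_mul c
  have hchpos : 0 < Real.cosh (π*t/2) := Real.cosh_pos _
  have hne : c * Real.cosh (π*t/2) ≠ 0 := by positivity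
  have hq := hsinh.div hcosh hne
  have harc := (Real.hasDerivAt_arctan _).comp t hq
  have hG := harc.const_mul (1/π)
  refine hG.congr_deriv ?_
  symm
  set sh := Real.sinh (π*t/2)
  set ch := Real.cosh (π*t/2)
  have hpyth : ch^2 - sh^2 = 1 := Real.cosh_sq_sub_sinh_sq _
  have hcosh2 : Real.cosh (π*t) = 2 * ch^2 - 1 := by
    have := Real.cosh_two_mul (π*t/2)
    rw [show (2:ℝ)*(π*t/2) = π*t by ring] at this
    rw [this]; nlinarith [hpyth]
  have hsina : Real.sin a = 2 * Real.sin (a/2) * Real.cos (a/2) := by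
    have := Real.sin_two_mul (a/2)
    rw [show (2:ℝ)*(a/2) = a by ring] at this; linarith
  have hcosa : Real.cos a = 2 * Real.cos (a/2)^2 - 1 := by
    have := Real.cos_two_mul (a/2)
    rw [show (2:ℝ)*(a/2) = a by ring] at this; linarith
  have hpy2 : Real.sin (a/2)^2 + Real.cos (a/2)^2 = 1 := Real.sin_sq_add_cos_sq _
  rw [hcosh2, hsina, hcosa, hcdef, Real.tan_eq_sin_div_cos]
  have hd1 : ch^2 - Real.cos (a/2)^2 > 0 := by nlinarith
  have hs2' : Real.sin (a/2) ≠ 0 := ne_of_gt hs2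
  have hc2' : Real.cos (a/2) ≠ 0 := ne_of_gt hc2
  have hch' : ch ≠ 0 := ne_of_gt hchpos
  have hπ' : π ≠ 0 := ne_of_gt hπ
  simp only [Pi.div_apply]
  field_simp
  rw [show Real.cosh (π*t/2) = ch from rfl, show Real.sinh (π*t/2) = sh from rfl]
  rw [div_eq_iff (by nlinarith : 2 * ch ^ 2 - 1 - (2 * Real.cos (a/2) ^ 2 - 1) ≠ 0)]
  linear_combination (2*ch^4) * hpy2 - (2*ch^4) * hpyth

lemma strip_kernel_integral (a y : ℝ) (ha0 : 0 < a) (ha1 : a < π) :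
    (∫ s : ℝ, Real.sin a / (2 * (Real.cosh (π * (y - s)) - Real.cos a))) = 1 - a / π := by
  have hπ := Real.pi_pos
  set c := Real.tan (a/2) with hcdef
  have hs2 : 0 < Real.sin (a/2) := Real.sin_pos_of_pos_of_lt_pi (by linarith) (by linarith)
  have hc2 : 0 < Real.cos (a/2) := Real.cos_pos_of_mem_Ioo ⟨by linarith, by linarith⟩
  have hc : 0 < c := by rw [hcdef, Real.tan_eq_sin_div_cos]; positivity
  have hsina : 0 < Real.sin a := Real.sin_pos_of_pos_of_lt_pi ha0 ha1
  have hcoslt : Real.cos a < 1 := by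
    have h1 : Real.cos a = 2 * Real.cos (a/2)^2 - 1 := by
      have := Real.cos_two_mul (a/2)
      rw [show (2:ℝ)*(a/2) = a by ring] at this; linarith
    have hpy2 : Real.sin (a/2)^2 + Real.cos (a/2)^2 = 1 := Real.sin_sq_add_cos_sq _
    nlinarith
  have hpos : ∀ t : ℝ, 0 < Real.cosh t - Real.cos a := fun t => by
    nlinarith [Real.one_le_cosh t]
  have hnonneg : ∀ t : ℝ, 0 ≤ Real.sin a / (2 * (Real.cosh (π * t) - Real.cos a)) := fun t => by
    have := hpos (π * t)
    positivity
  -- the antiderivative and its limit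
  set G : ℝ → ℝ := fun t => (1/π) * Real.arctan
      (Real.sinh (π*t/2) / (c * Real.cosh (π*t/2))) with hGdef
  have hq_lim : Tendsto (fun t : ℝ => Real.sinh (π*t/2) / (c * Real.cosh (π*t/2)))
      atTop (𝓝 (1/c)) := by
    have h1 : Tendsto (fun t : ℝ => π*t/2) atTop atTop :=
      (tendsto_id.const_mul_atTop hπ).atTop_div_const two_pos
    have h2 := strip_tanh_lim.comp h1
    have h3 := h2.const_mul (1/c)
    have heq : ∀ t : ℝ, (1/c) * ((fun t => Real.sinh t / Real.cosh t) ∘ (fun t : ℝ => π*t/2)) t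
        = Real.sinh (π*t/2) / (c * Real.cosh (π*t/2)) := by
      intro t
      have : Real.cosh (π*t/2) ≠ 0 := ne_of_gt (Real.cosh_pos _)
      simp only [Function.comp_apply]
      field_simp
    rw [show (1/c : ℝ) = (1/c) * 1 by ring]
    exact Tendsto.congr heq h3
  have hGlim : Tendsto G atTop (𝓝 ((1/π) * Real.arctan (1/c))) :=
    ((Real.continuous_arctan.tendsto _).comp hq_lim).const_mul (1/π)
  have harctan : Real.arctan (1/c) = π/2 - a/2 := by
    rw [one_div, Real.arctan_inv_of_pos hc, hcdef,
      Real.arctan_tan (by linarith) (by linarith)]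
  have hG0 : G 0 = 0 := by simp [hGdef]
  have hIoi : (∫ t in Set.Ioi (0:ℝ),
      Real.sin a / (2 * (Real.cosh (π * t) - Real.cos a))) = (1/π) * (π/2 - a/2) := by
    have := integral_Ioi_of_hasDerivAt_of_nonneg' (a := 0)
      (fun t _ => strip_kernel_deriv a ha0 ha1 t)
      (fun t _ => hnonneg t) hGlim
    rw [this, harctan]
    simp
  -- reduce whole-line integral
  have htrans : (∫ s : ℝ, Real.sin a / (2 * (Real.cosh (π * (y - s)) - Real.cos a)))
      = ∫ t : ℝ, Real.sin a / (2 * (Real.cosh (π * t) - Real.cos a)) :=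
    integral_sub_left_eq_self (fun t => Real.sin a / (2 * (Real.cosh (π * t) - Real.cos a)))
      volume y
  have heven : ∀ t : ℝ, Real.sin a / (2 * (Real.cosh (π * t) - Real.cos a))
      = Real.sin a / (2 * (Real.cosh (π * |t|) - Real.cos a)) := by
    intro t
    rw [show π * |t| = |π * t| by rw [abs_mul, abs_of_pos hπ], Real.cosh_abs]
  rw [htrans]
  calc (∫ t : ℝ, Real.sin a / (2 * (Real.cosh (π * t) - Real.cos a)))
      = ∫ t : ℝ, Real.sin a / (2 * (Real.cosh (π * |t|) - Real.cos a)) := by simp_rw [← heven]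
    _ = 2 * ∫ t in Set.Ioi (0:ℝ), Real.sin a / (2 * (Real.cosh (π * t) - Real.cos a)) :=
        integral_comp_abs (f := fun t => Real.sin a / (2 * (Real.cosh (π * t) - Real.cos a)))
    _ = 1 - a / π := by rw [hIoi]; field_simp

/-- the Poisson kernels
`P_b(x+iy, s) = sin(πx) / (2(cosh(π(y−s)) − cos(π(x−b))))`, `b ∈ {0,1}`, of the unit strip
satisfy `∫ P_0(x+iy, s) ds = 1 − x` and `∫ P_1(x+iy, s) ds = x` for `0 < x < 1`, `y ∈ ℝ`. -/
theorem stmt16 (x y : ℝ) (hx0 : 0 < x) (hx1 : x < 1) :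
    (∫ s : ℝ, Real.sin (π * x) /
        (2 * (Real.cosh (π * (y - s)) - Real.cos (π * (x - 0))))) = 1 - x ∧
    (∫ s : ℝ, Real.sin (π * x) /
        (2 * (Real.cosh (π * (y - s)) - Real.cos (π * (x - 1))))) = x := by
  have hπ := Real.pi_pos
  constructor
  · have h := strip_kernel_integral (π * x) y (by positivity) (by nlinarith)
    simp_rw [sub_zero]
    rw [h]
    field_simp
  · have key : ∀ s : ℝ, Real.sin (π * x) /
        (2 * (Real.cosh (π * (y - s)) - Real.cos (π * (x - 1))))
        = Real.sin (π * (1 - x)) /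
        (2 * (Real.cosh (π * (y - s)) - Real.cos (π * (1 - x)))) := by
      intro s
      rw [show π * (1 - x) = π - π * x by ring, Real.sin_pi_sub,
        show π - π * x = -(π * (x - 1)) by ring, Real.cos_neg]
    simp_rw [key]
    have h := strip_kernel_integral (π * (1 - x)) y (by nlinarith) (by nlinarith)
    rw [h]
    field_simp
    ring
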